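/- A proposition A has a classical proof (⊢ A is derivable in the classical multi-conclusion sequent calculus) if and only if its translation ‖A‖ has a constructive proof (⊢ ‖A‖ is derivable in the intuitionistic single-conclusion sequent calculus). -/

import Mathlib

/-- Terms: de Bruijn variables and a binary function symbol (union). -/
inductive Tm : Type where
  | var : Nat → Tm
  | cup : Tm → Tm → Tm
deriving DecidableEq

def Tm.rename (f : Nat → Nat) : Tm → Tm
  | .var n => .var (f n)
  | .cup s t => .cup (s.rename f) (t.rename f)

def Tm.subst (σ : Nat → Tm) : Tm → Tm
  | .var n => σ n
  | .cup s t => .cup (s.subst σ) (t.subst σ)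

/-- First-order formulas over Nat-indexed predicate symbols, de Bruijn binders. -/
inductive Fm : Type where
  | atom : Nat → List Tm → Fm
  | top : Fm
  | bot : Fm
  | neg : Fm → Fm
  | and : Fm → Fm → Fm
  | or : Fm → Fm → Fm
  | imp : Fm → Fm → Fm
  | all : Fm → Fm
  | ex : Fm → Fm
deriving DecidableEq

def liftR (f : Nat → Nat) : Nat → Nat
  | 0 => 0
  | n + 1 => f n + 1

def liftS (σ : Nat → Tm) : Nat → Tm
  | 0 => .var 0
  | n + 1 => (σ n).rename Nat.succ

def Fm.rename (f : Nat → Nat) : Fm → Fm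
  | .atom p l => .atom p (l.map (Tm.rename f))
  | .top => .top
  | .bot => .bot
  | .neg A => .neg (A.rename f)
  | .and A B => .and (A.rename f) (B.rename f)
  | .or A B => .or (A.rename f) (B.rename f)
  | .imp A B => .imp (A.rename f) (B.rename f)
  | .all A => .all (A.rename (liftR f))
  | .ex A => .ex (A.rename (liftR f))

def Fm.subst (σ : Nat → Tm) : Fm → Fm
  | .atom p l => .atom p (l.map (Tm.subst σ))
  | .top => .top
  | .bot => .bot
  | .neg A => .neg (A.subst σ)
  | .and A B => .and (A.subst σ) (B.subst σ)
  | .or A B => .or (A.subst σ) (B.subst σ)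
  | .imp A B => .imp (A.subst σ) (B.subst σ)
  | .all A => .all (A.subst (liftS σ))
  | .ex A => .ex (A.subst (liftS σ))

/-- Shift all free variables up by one. -/
def Fm.shift (A : Fm) : Fm := A.rename Nat.succ

/-- Instantiate the outermost bound variable with term `t` : `(t/x)A`. -/
def Fm.inst (t : Tm) (A : Fm) : Fm :=
  A.subst (fun n => match n with | 0 => t | n + 1 => .var n)

/-- Double negation. -/
def Fm.dn (A : Fm) : Fm := .neg (.neg A)

/-- Cut-free classical multi-conclusion sequent calculus (Figure 1). -/
inductive Cl : List Fm → List Fm → Prop where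
  | ax (A : Fm) : Cl [A] [A]
  | perm {Γ Γ' Δ Δ'} : Γ.Perm Γ' → Δ.Perm Δ' → Cl Γ Δ → Cl Γ' Δ'
  | contrL {Γ Δ A} : Cl (A :: A :: Γ) Δ → Cl (A :: Γ) Δ
  | contrR {Γ Δ A} : Cl Γ (A :: A :: Δ) → Cl Γ (A :: Δ)
  | weakL {Γ Δ A} : Cl Γ Δ → Cl (A :: Γ) Δ
  | weakR {Γ Δ A} : Cl Γ Δ → Cl Γ (A :: Δ)
  | topR {Γ Δ} : Cl Γ (.top :: Δ)
  | botL {Γ Δ} : Cl (.bot :: Γ) Δ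
  | negL {Γ Δ A} : Cl Γ (A :: Δ) → Cl (.neg A :: Γ) Δ
  | negR {Γ Δ A} : Cl (A :: Γ) Δ → Cl Γ (.neg A :: Δ)
  | andL {Γ Δ A B} : Cl (A :: B :: Γ) Δ → Cl (.and A B :: Γ) Δ
  | andR {Γ Δ A B} : Cl Γ (A :: Δ) → Cl Γ (B :: Δ) → Cl Γ (.and A B :: Δ)
  | orL {Γ Δ A B} : Cl (A :: Γ) Δ → Cl (B :: Γ) Δ → Cl (.or A B :: Γ) Δ
  | orR1 {Γ Δ A B} : Cl Γ (A :: Δ) → Cl Γ (.or A B :: Δ)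
  | orR2 {Γ Δ A B} : Cl Γ (B :: Δ) → Cl Γ (.or A B :: Δ)
  | impL {Γ Δ A B} : Cl Γ (A :: Δ) → Cl (B :: Γ) Δ → Cl (.imp A B :: Γ) Δ
  | impR {Γ Δ A B} : Cl (A :: Γ) (B :: Δ) → Cl Γ (.imp A B :: Δ)
  | allL {Γ Δ A} (t : Tm) : Cl (A.inst t :: Γ) Δ → Cl (.all A :: Γ) Δ
  | allR {Γ Δ A} : Cl (Γ.map Fm.shift) (A :: Δ.map Fm.shift) → Cl Γ (.all A :: Δ)
  | exL {Γ Δ A} : Cl (A :: Γ.map Fm.shift) (Δ.map Fm.shift) → Cl (.ex A :: Γ) Δ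
  | exR {Γ Δ A} (t : Tm) : Cl Γ (A.inst t :: Δ) → Cl Γ (.ex A :: Δ)

/-- Constructive (intuitionistic) single-conclusion sequent calculus:
the restriction of the classical calculus to sequents with at most one
conclusion, with the adapted ⇒-left rule. -/
inductive Intu : List Fm → Option Fm → Prop where
  | ax (A : Fm) : Intu [A] (some A)
  | perm {Γ Γ' Δ} : Γ.Perm Γ' → Intu Γ Δ → Intu Γ' Δ
  | contrL {Γ Δ A} : Intu (A :: A :: Γ) Δ → Intu (A :: Γ) Δ
  | weakL {Γ Δ A} : Intu Γ Δ → Intu (A :: Γ) Δ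
  | weakR {Γ A} : Intu Γ none → Intu Γ (some A)
  | topR {Γ} : Intu Γ (some .top)
  | botL {Γ Δ} : Intu (.bot :: Γ) Δ
  | negL {Γ A} : Intu Γ (some A) → Intu (.neg A :: Γ) none
  | negR {Γ A} : Intu (A :: Γ) none → Intu Γ (some (.neg A))
  | andL {Γ Δ A B} : Intu (A :: B :: Γ) Δ → Intu (.and A B :: Γ) Δ
  | andR {Γ A B} : Intu Γ (some A) → Intu Γ (some B) → Intu Γ (some (.and A B))
  | orL {Γ Δ A B} : Intu (A :: Γ) Δ → Intu (B :: Γ) Δ → Intu (.or A B :: Γ) Δ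
  | orR1 {Γ A B} : Intu Γ (some A) → Intu Γ (some (.or A B))
  | orR2 {Γ A B} : Intu Γ (some B) → Intu Γ (some (.or A B))
  | impL {Γ Δ A B} : Intu Γ (some A) → Intu (B :: Γ) Δ → Intu (.imp A B :: Γ) Δ
  | impR {Γ A B} : Intu (A :: Γ) (some B) → Intu Γ (some (.imp A B))
  | allL {Γ Δ A} (t : Tm) : Intu (A.inst t :: Γ) Δ → Intu (.all A :: Γ) Δ
  | allR {Γ A} : Intu (Γ.map Fm.shift) (some A) → Intu Γ (some (.all A))
  | exL {Γ Δ A} : Intu (A :: Γ.map Fm.shift) (Δ.map Fm.shift) → Intu (.ex A :: Γ) Δ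
  | exR {Γ A} (t : Tm) : Intu Γ (some (A.inst t)) → Intu Γ (some (.ex A))

/-- Dowek's translation ‖·‖: double negations both before and after each
connective and quantifier, atoms unchanged. -/
def Fm.bar : Fm → Fm
  | .atom p l => .atom p l
  | .top => Fm.dn .top
  | .bot => Fm.dn .bot
  | .neg A => Fm.dn (Fm.dn (.neg A.bar))
  | .and A B => Fm.dn (.and (Fm.dn A.bar) (Fm.dn B.bar))
  | .or A B => Fm.dn (.or (Fm.dn A.bar) (Fm.dn B.bar))
  | .imp A B => Fm.dn (.imp (Fm.dn A.bar) (Fm.dn B.bar))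
  | .all A => Fm.dn (.all (Fm.dn A.bar))
  | .ex A => Fm.dn (.ex (Fm.dn A.bar))

/-- The light translation |·|: like ‖·‖ but the outermost double negation
is removed. -/
def Fm.light : Fm → Fm
  | .atom p l => .atom p l
  | .top => .top
  | .bot => .bot
  | .neg A => .neg (Fm.dn A.bar)
  | .and A B => .and (Fm.dn A.bar) (Fm.dn B.bar)
  | .or A B => .or (Fm.dn A.bar) (Fm.dn B.bar)
  | .imp A B => .imp (Fm.dn A.bar) (Fm.dn B.bar)
  | .all A => .all (Fm.dn A.bar)
  | .ex A => .ex (Fm.dn A.bar)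

/-- A formula is atomic if it is of the form `atom p l`. -/
def Fm.isAtom : Fm → Prop
  | .atom _ _ => True
  | _ => False


/- ===================== Auxiliary development ===================== -/

section Aux

/-! ### Renaming and substitution lemmas -/

theorem Tm.rename_inj {f : Nat → Nat} (hf : Function.Injective f) :
    ∀ {s t : Tm}, s.rename f = t.rename f → s = t := by
  intro s
  induction s with
  | var n => intro t h; cases t <;> simp [Tm.rename] at h; simp [hf h]
  | cup a b iha ihb =>
    intro t h; cases t <;> simp [Tm.rename] at h
    simp [iha h.1, ihb h.2]

theorem liftR_inj {f : Nat → Nat} (hf : Function.Injective f) :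
    Function.Injective (liftR f) := by
  intro a b h
  cases a <;> cases b <;> simp [liftR] at h ⊢ <;> first | rfl | exact hf h

theorem Fm.rename_inj : ∀ {A B : Fm} {f : Nat → Nat}, Function.Injective f →
    A.rename f = B.rename f → A = B := by
  intro A
  induction A with
  | atom p l =>
    intro B f hf h; cases B <;> simp [Fm.rename] at h
    obtain ⟨h1, h2⟩ := h
    subst h1
    simp only [Fm.atom.injEq, true_and]
    exact List.map_injective_iff.mpr (fun _ _ => Tm.rename_inj hf) h2
  | top => intro B f hf h; cases B <;> simp [Fm.rename] at h; rfl
  | bot => intro B f hf h; cases B <;> simp [Fm.rename] at h; rfl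
  | neg A ih =>
    intro B f hf h; cases B <;> simp [Fm.rename] at h
    rw [ih hf h]
  | and A1 A2 ih1 ih2 =>
    intro B f hf h; cases B <;> simp [Fm.rename] at h
    rw [ih1 hf h.1, ih2 hf h.2]
  | or A1 A2 ih1 ih2 =>
    intro B f hf h; cases B <;> simp [Fm.rename] at h
    rw [ih1 hf h.1, ih2 hf h.2]
  | imp A1 A2 ih1 ih2 =>
    intro B f hf h; cases B <;> simp [Fm.rename] at h
    rw [ih1 hf h.1, ih2 hf h.2]
  | all A ih =>
    intro B f hf h; cases B <;> simp [Fm.rename] at h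
    rw [ih (liftR_inj hf) h]
  | ex A ih =>
    intro B f hf h; cases B <;> simp [Fm.rename] at h
    rw [ih (liftR_inj hf) h]

theorem Fm.shift_inj : Function.Injective Fm.shift := by
  intro a b h
  exact Fm.rename_inj (fun _ _ h => Nat.succ_injective h) h

theorem Tm.subst_rename (σ : Nat → Tm) (f : Nat → Nat) :
    ∀ t : Tm, (t.rename f).subst σ = t.subst (fun n => σ (f n)) := by
  intro t; induction t with
  | var n => rfl
  | cup a b iha ihb => simp [Tm.rename, Tm.subst, iha, ihb]

theorem liftS_liftR (σ : Nat → Tm) (f : Nat → Nat) :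
    (fun n => liftS σ (liftR f n)) = liftS (fun n => σ (f n)) := by
  funext n; cases n <;> simp [liftS, liftR]

theorem Fm.subst_rename (σ : Nat → Tm) (f : Nat → Nat) :
    ∀ A : Fm, (A.rename f).subst σ = A.subst (fun n => σ (f n)) := by
  intro A
  induction A generalizing σ f with
  | atom p l => simp [Fm.rename, Fm.subst, Tm.subst_rename]
  | top => rfl
  | bot => rfl
  | neg A ih => simp [Fm.rename, Fm.subst, ih]
  | and A B iha ihb => simp [Fm.rename, Fm.subst, iha, ihb]
  | or A B iha ihb => simp [Fm.rename, Fm.subst, iha, ihb]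
  | imp A B iha ihb => simp [Fm.rename, Fm.subst, iha, ihb]
  | all A ih => simp [Fm.rename, Fm.subst, ih, liftS_liftR]
  | ex A ih => simp [Fm.rename, Fm.subst, ih, liftS_liftR]

theorem liftS_var : liftS Tm.var = Tm.var := by
  funext n; cases n <;> simp [liftS, Tm.rename]

theorem Tm.subst_var : ∀ t : Tm, t.subst Tm.var = t := by
  intro t; induction t with
  | var n => rfl
  | cup a b iha ihb => simp [Tm.subst, iha, ihb]

theorem Fm.subst_var : ∀ A : Fm, A.subst Tm.var = A := by
  intro A
  induction A with
  | atom p l =>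
    simp only [Fm.subst, Fm.atom.injEq, true_and]
    calc List.map (Tm.subst Tm.var) l = List.map id l :=
          List.map_congr_left (fun a _ => Tm.subst_var a)
      _ = l := List.map_id l
  | top => rfl
  | bot => rfl
  | neg A ih => simp [Fm.subst, ih]
  | and A B iha ihb => simp [Fm.subst, iha, ihb]
  | or A B iha ihb => simp [Fm.subst, iha, ihb]
  | imp A B iha ihb => simp [Fm.subst, iha, ihb]
  | all A ih => simp [Fm.subst, liftS_var, ih]
  | ex A ih => simp [Fm.subst, liftS_var, ih]

/-- Instantiating the shifted-under-binder body with `var 0` gives back the body. -/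
theorem Fm.inst0 (A : Fm) : (A.rename (liftR Nat.succ)).inst (.var 0) = A := by
  unfold Fm.inst
  rw [Fm.subst_rename]
  have : (fun n => (fun n => match n with | 0 => Tm.var 0 | n + 1 => Tm.var n) (liftR Nat.succ n))
      = Tm.var := by
    funext n; cases n <;> simp [liftR]
  rw [this, Fm.subst_var]

end Aux


section Trans

/-! ### The translation commutes with renaming and substitution -/

theorem Fm.bar_rename : ∀ (A : Fm) (f : Nat → Nat), (A.rename f).bar = A.bar.rename f := by
  intro A
  induction A with
  | atom p l => intro f; rfl
  | top => intro f; rfl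
  | bot => intro f; rfl
  | neg A ih => intro f; simp [Fm.rename, Fm.bar, Fm.dn, ih]
  | and A B iha ihb => intro f; simp [Fm.rename, Fm.bar, Fm.dn, iha, ihb]
  | or A B iha ihb => intro f; simp [Fm.rename, Fm.bar, Fm.dn, iha, ihb]
  | imp A B iha ihb => intro f; simp [Fm.rename, Fm.bar, Fm.dn, iha, ihb]
  | all A ih => intro f; simp [Fm.rename, Fm.bar, Fm.dn, ih]
  | ex A ih => intro f; simp [Fm.rename, Fm.bar, Fm.dn, ih]

theorem Fm.bar_subst : ∀ (A : Fm) (σ : Nat → Tm), (A.subst σ).bar = A.bar.subst σ := by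
  intro A
  induction A with
  | atom p l => intro σ; rfl
  | top => intro σ; rfl
  | bot => intro σ; rfl
  | neg A ih => intro σ; simp [Fm.subst, Fm.bar, Fm.dn, ih]
  | and A B iha ihb => intro σ; simp [Fm.subst, Fm.bar, Fm.dn, iha, ihb]
  | or A B iha ihb => intro σ; simp [Fm.subst, Fm.bar, Fm.dn, iha, ihb]
  | imp A B iha ihb => intro σ; simp [Fm.subst, Fm.bar, Fm.dn, iha, ihb]
  | all A ih => intro σ; simp [Fm.subst, Fm.bar, Fm.dn, ih]
  | ex A ih => intro σ; simp [Fm.subst, Fm.bar, Fm.dn, ih]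

theorem Fm.bar_inst (A : Fm) (t : Tm) : (A.inst t).bar = A.bar.inst t :=
  Fm.bar_subst A _

theorem Fm.light_rename (A : Fm) (f : Nat → Nat) : (A.rename f).light = A.light.rename f := by
  cases A <;> simp [Fm.rename, Fm.light, Fm.dn, Fm.bar_rename]

theorem Fm.bar_shift (A : Fm) : A.shift.bar = A.bar.shift := Fm.bar_rename A _
theorem Fm.light_shift (A : Fm) : A.shift.light = A.light.shift := Fm.light_rename A _

/-! ### The double-negation collapse map `e` -/

/-- smart negation -/
def nneg : Fm → Fm
  | .neg X => X
  | X => .neg X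

/-- collapse double negations -/
def e : Fm → Fm
  | .atom p l => .atom p l
  | .top => .top
  | .bot => .bot
  | .neg A => nneg (e A)
  | .and A B => .and (e A) (e B)
  | .or A B => .or (e A) (e B)
  | .imp A B => .imp (e A) (e B)
  | .all A => .all (e A)
  | .ex A => .ex (e A)

theorem e_ok : ∀ A : Fm, ∀ Z, e A ≠ .neg (.neg Z) := by
  intro A
  induction A with
  | neg A ih =>
    intro Z
    cases hA : e A with
    | neg C =>
      have hC : ∀ W, C ≠ .neg W := by
        intro W hW; exact ih W (by rw [hA, hW])
      simp only [e, hA, nneg]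
      intro h; exact hC _ (by rw [h])
    | _ => simp [e, hA, nneg]
  | _ => intro Z <;> simp [e, nneg]

theorem nneg_of_nonneg {X : Fm} (h : ∀ C, X ≠ .neg C) : nneg X = .neg X := by
  cases X <;> first | rfl | exact absurd rfl (h _)

theorem nneg_nneg {X : Fm} (h : ∀ Z, X ≠ .neg (.neg Z)) : nneg (nneg X) = X := by
  cases X with
  | neg C =>
    have hC : ∀ W, C ≠ .neg W := fun W hW => h W (by rw [hW])
    show nneg C = .neg C
    exact nneg_of_nonneg hC
  | _ => simp [nneg]

theorem e_dn (A : Fm) : e (Fm.dn A) = e A := by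
  show nneg (nneg (e A)) = e A
  exact nneg_nneg (e_ok A)

theorem e_nonneg {A : Fm} (h : ∀ B, A ≠ .neg B) : ∀ C, e A ≠ .neg C := by
  cases A with
  | neg B => exact absurd rfl (h _)
  | _ => simp [e]

theorem nneg_rename (X : Fm) (f : Nat → Nat) : nneg (X.rename f) = (nneg X).rename f := by
  cases X <;> simp [Fm.rename, nneg]

theorem nneg_subst (X : Fm) (σ : Nat → Tm) : nneg (X.subst σ) = (nneg X).subst σ := by
  cases X <;> simp [Fm.subst, nneg]

theorem e_rename : ∀ (A : Fm) (f : Nat → Nat), e (A.rename f) = (e A).rename f := by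
  intro A
  induction A with
  | neg A ih => intro f; simp [Fm.rename, e, ih, nneg_rename]
  | atom p l => intro f; rfl
  | top => intro f; rfl
  | bot => intro f; rfl
  | and A B iha ihb => intro f; simp [Fm.rename, e, iha, ihb]
  | or A B iha ihb => intro f; simp [Fm.rename, e, iha, ihb]
  | imp A B iha ihb => intro f; simp [Fm.rename, e, iha, ihb]
  | all A ih => intro f; simp [Fm.rename, e, ih]
  | ex A ih => intro f; simp [Fm.rename, e, ih]

theorem e_subst : ∀ (A : Fm) (σ : Nat → Tm), e (A.subst σ) = (e A).subst σ := by
  intro A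
  induction A with
  | neg A ih => intro σ; simp [Fm.subst, e, ih, nneg_subst]
  | atom p l => intro σ; rfl
  | top => intro σ; rfl
  | bot => intro σ; rfl
  | and A B iha ihb => intro σ; simp [Fm.subst, e, iha, ihb]
  | or A B iha ihb => intro σ; simp [Fm.subst, e, iha, ihb]
  | imp A B iha ihb => intro σ; simp [Fm.subst, e, iha, ihb]
  | all A ih => intro σ; simp [Fm.subst, e, ih]
  | ex A ih => intro σ; simp [Fm.subst, e, ih]

theorem e_inst (A : Fm) (t : Tm) : e (A.inst t) = (e A).inst t := e_subst A _
theorem e_shift (A : Fm) : e A.shift = (e A).shift := e_rename A _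

theorem e_bar : ∀ A : Fm, e A.bar = e A := by
  intro A
  induction A with
  | atom p l => rfl
  | top => simp [Fm.bar, e_dn]
  | bot => simp [Fm.bar, e_dn]
  | neg A ih =>
    show e (Fm.dn (Fm.dn (.neg A.bar))) = e (.neg A)
    rw [e_dn, e_dn]
    show nneg (e A.bar) = nneg (e A)
    rw [ih]
  | and A B iha ihb =>
    show e (Fm.dn (.and (Fm.dn A.bar) (Fm.dn B.bar))) = e (.and A B)
    rw [e_dn]
    show (e (Fm.dn A.bar)).and (e (Fm.dn B.bar)) = (e A).and (e B)
    rw [e_dn, e_dn, iha, ihb]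
  | or A B iha ihb =>
    show e (Fm.dn (.or (Fm.dn A.bar) (Fm.dn B.bar))) = e (.or A B)
    rw [e_dn]
    show (e (Fm.dn A.bar)).or (e (Fm.dn B.bar)) = (e A).or (e B)
    rw [e_dn, e_dn, iha, ihb]
  | imp A B iha ihb =>
    show e (Fm.dn (.imp (Fm.dn A.bar) (Fm.dn B.bar))) = e (.imp A B)
    rw [e_dn]
    show (e (Fm.dn A.bar)).imp (e (Fm.dn B.bar)) = (e A).imp (e B)
    rw [e_dn, e_dn, iha, ihb]
  | all A ih =>
    show e (Fm.dn (.all (Fm.dn A.bar))) = e (.all A)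
    rw [e_dn]
    show (e (Fm.dn A.bar)).all = (e A).all
    rw [e_dn, ih]
  | ex A ih =>
    show e (Fm.dn (.ex (Fm.dn A.bar))) = e (.ex A)
    rw [e_dn]
    show (e (Fm.dn A.bar)).ex = (e A).ex
    rw [e_dn, ih]

end Trans


section CoreSec

/-! ### Size -/

def Fm.size : Fm → Nat
  | .atom _ _ => 1
  | .top => 1
  | .bot => 1
  | .neg A => A.size + 1
  | .and A B => A.size + B.size + 1
  | .or A B => A.size + B.size + 1
  | .imp A B => A.size + B.size + 1
  | .all A => A.size + 1
  | .ex A => A.size + 1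

theorem Fm.size_pos : ∀ X : Fm, 0 < X.size := by
  intro X; cases X <;> simp [Fm.size]

/-! ### Basic derived rules for Cl -/

theorem Cl.permL {Γ Γ' Δ} (p : Γ.Perm Γ') (h : Cl Γ Δ) : Cl Γ' Δ := Cl.perm p (List.Perm.refl _) h
theorem Cl.permR {Γ Δ Δ'} (p : Δ.Perm Δ') (h : Cl Γ Δ) : Cl Γ Δ' := Cl.perm (List.Perm.refl _) p h

theorem Cl.dnIL {Γ Δ A} (h : Cl (A :: Γ) Δ) : Cl (.neg (.neg A) :: Γ) Δ :=
  Cl.negL (Cl.negR h)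

theorem Cl.dnIR {Γ Δ A} (h : Cl Γ (A :: Δ)) : Cl Γ (.neg (.neg A) :: Δ) :=
  Cl.negR (Cl.negL h)

theorem Cl.weakLs {Γ Δ} (S : List Fm) (h : Cl Γ Δ) : Cl (S ++ Γ) Δ := by
  induction S with
  | nil => exact h
  | cons A S ih => exact Cl.weakL ih

theorem Cl.weakRs {Γ Δ} (S : List Fm) (h : Cl Γ Δ) : Cl Γ (S ++ Δ) := by
  induction S with
  | nil => exact h
  | cons A S ih => exact Cl.weakR ih

theorem Cl.subR {Γ Δ Δ'} (hs : Δ.Sublist Δ') (h : Cl Γ Δ) : Cl Γ Δ' := by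
  obtain ⟨l, hp⟩ := hs.exists_perm_append
  exact Cl.permR (((List.perm_append_comm).trans hp.symm)) (Cl.weakRs l h)

theorem Cl.subL {Γ Γ' Δ} (hs : Γ.Sublist Γ') (h : Cl Γ Δ) : Cl Γ' Δ := by
  obtain ⟨l, hp⟩ := hs.exists_perm_append
  exact Cl.permL (((List.perm_append_comm).trans hp.symm)) (Cl.weakLs l h)

/-! ### The core of a formula: strip leading double negations -/

def core : Fm → Fm
  | .neg (.neg A) => core A
  | A => A

theorem core_spec : ∀ (n : Nat) (X : Fm), X.size ≤ n →
    e (core X) = e X ∧ (∀ Z, core X ≠ .neg (.neg Z)) ∧ (core X).size ≤ X.size := by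
  intro n
  induction n with
  | zero => intro X h; have := Fm.size_pos X; omega
  | succ n ih =>
    intro X h
    cases X with
    | neg B =>
      cases B with
      | neg A =>
        have hA : A.size ≤ n := by simp [Fm.size] at h; omega
        obtain ⟨h1, h2, h3⟩ := ih A hA
        have hc : core (.neg (.neg A)) = core A := rfl
        refine ⟨?_, ?_, ?_⟩
        · rw [hc, h1]
          exact (e_dn A).symm
        · rw [hc]; exact h2
        · rw [hc]; simp [Fm.size]; omega
      | atom p l => exact ⟨rfl, by simp [core], le_rfl⟩
      | top => exact ⟨rfl, by simp [core], le_rfl⟩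
      | bot => exact ⟨rfl, by simp [core], le_rfl⟩
      | and A B => exact ⟨rfl, by simp [core], le_rfl⟩
      | or A B => exact ⟨rfl, by simp [core], le_rfl⟩
      | imp A B => exact ⟨rfl, by simp [core], le_rfl⟩
      | all A => exact ⟨rfl, by simp [core], le_rfl⟩
      | ex A => exact ⟨rfl, by simp [core], le_rfl⟩
    | atom p l => exact ⟨rfl, by simp [core], le_rfl⟩
    | top => exact ⟨rfl, by simp [core], le_rfl⟩
    | bot => exact ⟨rfl, by simp [core], le_rfl⟩
    | and A B => exact ⟨rfl, by simp [core], le_rfl⟩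
    | or A B => exact ⟨rfl, by simp [core], le_rfl⟩
    | imp A B => exact ⟨rfl, by simp [core], le_rfl⟩
    | all A => exact ⟨rfl, by simp [core], le_rfl⟩
    | ex A => exact ⟨rfl, by simp [core], le_rfl⟩

theorem core_e (X : Fm) : e (core X) = e X := (core_spec X.size X le_rfl).1
theorem core_nn (X : Fm) : ∀ Z, core X ≠ .neg (.neg Z) := (core_spec X.size X le_rfl).2.1
theorem core_size (X : Fm) : (core X).size ≤ X.size := (core_spec X.size X le_rfl).2.2

theorem coreL : ∀ (n : Nat) (X : Fm) {Γ Δ}, X.size ≤ n → Cl (core X :: Γ) Δ → Cl (X :: Γ) Δ := by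
  intro n
  induction n with
  | zero => intro X _ _ h; have := Fm.size_pos X; omega
  | succ n ih =>
    intro X Γ Δ h hd
    cases X with
    | neg B =>
      cases B with
      | neg A =>
        have hA : A.size ≤ n := by simp [Fm.size] at h; omega
        exact Cl.dnIL (ih A hA hd)
      | atom p l => exact hd
      | top => exact hd
      | bot => exact hd
      | and A B => exact hd
      | or A B => exact hd
      | imp A B => exact hd
      | all A => exact hd
      | ex A => exact hd
    | atom p l => exact hd
    | top => exact hd
    | bot => exact hd
    | and A B => exact hd
    | or A B => exact hd
    | imp A B => exact hd
    | all A => exact hd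
    | ex A => exact hd

theorem coreR : ∀ (n : Nat) (X : Fm) {Γ Δ}, X.size ≤ n → Cl Γ (core X :: Δ) → Cl Γ (X :: Δ) := by
  intro n
  induction n with
  | zero => intro X _ _ h; have := Fm.size_pos X; omega
  | succ n ih =>
    intro X Γ Δ h hd
    cases X with
    | neg B =>
      cases B with
      | neg A =>
        have hA : A.size ≤ n := by simp [Fm.size] at h; omega
        exact Cl.dnIR (ih A hA hd)
      | atom p l => exact hd
      | top => exact hd
      | bot => exact hd
      | and A B => exact hd
      | or A B => exact hd
      | imp A B => exact hd
      | all A => exact hd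
      | ex A => exact hd
    | atom p l => exact hd
    | top => exact hd
    | bot => exact hd
    | and A B => exact hd
    | or A B => exact hd
    | imp A B => exact hd
    | all A => exact hd
    | ex A => exact hd

theorem coreL' (X : Fm) {Γ Δ} (h : Cl (core X :: Γ) Δ) : Cl (X :: Γ) Δ :=
  coreL X.size X le_rfl h

theorem coreR' (X : Fm) {Γ Δ} (h : Cl Γ (core X :: Δ)) : Cl Γ (X :: Δ) :=
  coreR X.size X le_rfl h

end CoreSec


section HeadSec

theorem core_nonneg {X : Fm} : ∀ B, core X ≠ .neg B → True := fun _ _ => trivial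

theorem core_head_neg {X : Fm} {c : Fm} (h : e X = .neg c) :
    ∃ X1, core X = .neg X1 ∧ e X1 = c := by
  have he := core_e X
  have hnn := core_nn X
  rw [h] at he
  cases hc : core X with
  | neg W =>
    rw [hc] at he hnn
    have hW : ∀ B, W ≠ .neg B := by
      intro B hB; exact hnn B (by rw [hB])
    simp only [e] at he
    rw [nneg_of_nonneg (e_nonneg hW)] at he
    exact ⟨W, rfl, by injection he⟩
  | atom p l => rw [hc] at he; simp [e] at he
  | top => rw [hc] at he; simp [e] at he
  | bot => rw [hc] at he; simp [e] at he
  | and A B => rw [hc] at he; simp [e] at he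
  | or A B => rw [hc] at he; simp [e] at he
  | imp A B => rw [hc] at he; simp [e] at he
  | all A => rw [hc] at he; simp [e] at he
  | ex A => rw [hc] at he; simp [e] at he

theorem core_head_atom {X : Fm} {p : Nat} {l : List Tm} (h : e X = .atom p l) :
    core X = .atom p l := by
  have he := core_e X
  have hnn := core_nn X
  rw [h] at he
  cases hc : core X with
  | neg W =>
    rw [hc] at he hnn
    have hW : ∀ B, W ≠ .neg B := by
      intro B hB; exact hnn B (by rw [hB])
    simp only [e] at he
    rw [nneg_of_nonneg (e_nonneg hW)] at he
    simp at he
  | atom q m => rw [hc] at he; simp [e] at he; simp [he]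
  | top => rw [hc] at he; simp [e] at he
  | bot => rw [hc] at he; simp [e] at he
  | and A B => rw [hc] at he; simp [e] at he
  | or A B => rw [hc] at he; simp [e] at he
  | imp A B => rw [hc] at he; simp [e] at he
  | all A => rw [hc] at he; simp [e] at he
  | ex A => rw [hc] at he; simp [e] at he

theorem core_head_top {X : Fm} (h : e X = .top) : core X = .top := by
  have he := core_e X
  have hnn := core_nn X
  rw [h] at he
  cases hc : core X with
  | neg W =>
    rw [hc] at he hnn
    have hW : ∀ B, W ≠ .neg B := by
      intro B hB; exact hnn B (by rw [hB])
    simp only [e] at he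
    rw [nneg_of_nonneg (e_nonneg hW)] at he
    simp at he
  | top => rfl
  | atom q m => rw [hc] at he; simp [e] at he
  | bot => rw [hc] at he; simp [e] at he
  | and A B => rw [hc] at he; simp [e] at he
  | or A B => rw [hc] at he; simp [e] at he
  | imp A B => rw [hc] at he; simp [e] at he
  | all A => rw [hc] at he; simp [e] at he
  | ex A => rw [hc] at he; simp [e] at he

theorem core_head_bot {X : Fm} (h : e X = .bot) : core X = .bot := by
  have he := core_e X
  have hnn := core_nn X
  rw [h] at he
  cases hc : core X with
  | neg W =>
    rw [hc] at he hnn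
    have hW : ∀ B, W ≠ .neg B := by
      intro B hB; exact hnn B (by rw [hB])
    simp only [e] at he
    rw [nneg_of_nonneg (e_nonneg hW)] at he
    simp at he
  | bot => rfl
  | atom q m => rw [hc] at he; simp [e] at he
  | top => rw [hc] at he; simp [e] at he
  | and A B => rw [hc] at he; simp [e] at he
  | or A B => rw [hc] at he; simp [e] at he
  | imp A B => rw [hc] at he; simp [e] at he
  | all A => rw [hc] at he; simp [e] at he
  | ex A => rw [hc] at he; simp [e] at he

theorem core_head_and {X : Fm} {a b : Fm} (h : e X = .and a b) :
    ∃ X1 X2, core X = .and X1 X2 ∧ e X1 = a ∧ e X2 = b := by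
  have he := core_e X
  have hnn := core_nn X
  rw [h] at he
  cases hc : core X with
  | neg W =>
    rw [hc] at he hnn
    have hW : ∀ B, W ≠ .neg B := by
      intro B hB; exact hnn B (by rw [hB])
    simp only [e] at he
    rw [nneg_of_nonneg (e_nonneg hW)] at he
    simp at he
  | and A B =>
    rw [hc] at he; simp only [e, Fm.and.injEq] at he
    exact ⟨A, B, rfl, he.1, he.2⟩
  | atom q m => rw [hc] at he; simp [e] at he
  | top => rw [hc] at he; simp [e] at he
  | bot => rw [hc] at he; simp [e] at he
  | or A B => rw [hc] at he; simp [e] at he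
  | imp A B => rw [hc] at he; simp [e] at he
  | all A => rw [hc] at he; simp [e] at he
  | ex A => rw [hc] at he; simp [e] at he

theorem core_head_or {X : Fm} {a b : Fm} (h : e X = .or a b) :
    ∃ X1 X2, core X = .or X1 X2 ∧ e X1 = a ∧ e X2 = b := by
  have he := core_e X
  have hnn := core_nn X
  rw [h] at he
  cases hc : core X with
  | neg W =>
    rw [hc] at he hnn
    have hW : ∀ B, W ≠ .neg B := by
      intro B hB; exact hnn B (by rw [hB])
    simp only [e] at he
    rw [nneg_of_nonneg (e_nonneg hW)] at he
    simp at he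
  | or A B =>
    rw [hc] at he; simp only [e, Fm.or.injEq] at he
    exact ⟨A, B, rfl, he.1, he.2⟩
  | atom q m => rw [hc] at he; simp [e] at he
  | top => rw [hc] at he; simp [e] at he
  | bot => rw [hc] at he; simp [e] at he
  | and A B => rw [hc] at he; simp [e] at he
  | imp A B => rw [hc] at he; simp [e] at he
  | all A => rw [hc] at he; simp [e] at he
  | ex A => rw [hc] at he; simp [e] at he

theorem core_head_imp {X : Fm} {a b : Fm} (h : e X = .imp a b) :
    ∃ X1 X2, core X = .imp X1 X2 ∧ e X1 = a ∧ e X2 = b := by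
  have he := core_e X
  have hnn := core_nn X
  rw [h] at he
  cases hc : core X with
  | neg W =>
    rw [hc] at he hnn
    have hW : ∀ B, W ≠ .neg B := by
      intro B hB; exact hnn B (by rw [hB])
    simp only [e] at he
    rw [nneg_of_nonneg (e_nonneg hW)] at he
    simp at he
  | imp A B =>
    rw [hc] at he; simp only [e, Fm.imp.injEq] at he
    exact ⟨A, B, rfl, he.1, he.2⟩
  | atom q m => rw [hc] at he; simp [e] at he
  | top => rw [hc] at he; simp [e] at he
  | bot => rw [hc] at he; simp [e] at he
  | and A B => rw [hc] at he; simp [e] at he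
  | or A B => rw [hc] at he; simp [e] at he
  | all A => rw [hc] at he; simp [e] at he
  | ex A => rw [hc] at he; simp [e] at he

theorem core_head_all {X : Fm} {a : Fm} (h : e X = .all a) :
    ∃ X1, core X = .all X1 ∧ e X1 = a := by
  have he := core_e X
  have hnn := core_nn X
  rw [h] at he
  cases hc : core X with
  | neg W =>
    rw [hc] at he hnn
    have hW : ∀ B, W ≠ .neg B := by
      intro B hB; exact hnn B (by rw [hB])
    simp only [e] at he
    rw [nneg_of_nonneg (e_nonneg hW)] at he
    simp at he
  | all A =>
    rw [hc] at he; simp only [e, Fm.all.injEq] at he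
    exact ⟨A, rfl, he⟩
  | atom q m => rw [hc] at he; simp [e] at he
  | top => rw [hc] at he; simp [e] at he
  | bot => rw [hc] at he; simp [e] at he
  | and A B => rw [hc] at he; simp [e] at he
  | or A B => rw [hc] at he; simp [e] at he
  | imp A B => rw [hc] at he; simp [e] at he
  | ex A => rw [hc] at he; simp [e] at he

theorem core_head_ex {X : Fm} {a : Fm} (h : e X = .ex a) :
    ∃ X1, core X = .ex X1 ∧ e X1 = a := by
  have he := core_e X
  have hnn := core_nn X
  rw [h] at he
  cases hc : core X with
  | neg W =>
    rw [hc] at he hnn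
    have hW : ∀ B, W ≠ .neg B := by
      intro B hB; exact hnn B (by rw [hB])
    simp only [e] at he
    rw [nneg_of_nonneg (e_nonneg hW)] at he
    simp at he
  | ex A =>
    rw [hc] at he; simp only [e, Fm.ex.injEq] at he
    exact ⟨A, rfl, he⟩
  | atom q m => rw [hc] at he; simp [e] at he
  | top => rw [hc] at he; simp [e] at he
  | bot => rw [hc] at he; simp [e] at he
  | and A B => rw [hc] at he; simp [e] at he
  | or A B => rw [hc] at he; simp [e] at he
  | imp A B => rw [hc] at he; simp [e] at he
  | all A => rw [hc] at he; simp [e] at he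

end HeadSec


section ExpandSec

theorem expand_aux : ∀ (n : Nat) (X Y : Fm), X.size + Y.size ≤ n → e X = e Y → Cl [X] [Y] := by
  intro n
  induction n with
  | zero =>
    intro X Y h _
    have := Fm.size_pos X; have := Fm.size_pos Y; omega
  | succ n ih =>
    intro X Y hs he
    cases hEX : e X with
    | atom p l =>
      have hcX := core_head_atom hEX
      have hcY := core_head_atom (he ▸ hEX)
      apply coreL' X
      apply coreR' Y
      rw [hcX, hcY]
      exact Cl.ax _
    | top =>
      have hcY := core_head_top (he ▸ hEX)
      apply coreR' Y
      rw [hcY]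
      exact Cl.topR
    | bot =>
      have hcX := core_head_bot hEX
      apply coreL' X
      rw [hcX]
      exact Cl.botL
    | neg c =>
      obtain ⟨X1, hcX, hX1⟩ := core_head_neg hEX
      obtain ⟨Y1, hcY, hY1⟩ := core_head_neg (he ▸ hEX)
      apply coreL' X; apply coreR' Y
      rw [hcX, hcY]
      apply Cl.negR
      apply Cl.permL (List.Perm.swap _ _ _)
      apply Cl.negL
      have hszX : X1.size + 1 ≤ X.size := by
        have := core_size X; rw [hcX] at this; simpa [Fm.size] using this
      have hszY : Y1.size + 1 ≤ Y.size := by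
        have := core_size Y; rw [hcY] at this; simpa [Fm.size] using this
      exact ih Y1 X1 (by omega) (hY1.trans hX1.symm)
    | and a b =>
      obtain ⟨X1, X2, hcX, hX1, hX2⟩ := core_head_and hEX
      obtain ⟨Y1, Y2, hcY, hY1, hY2⟩ := core_head_and (he ▸ hEX)
      apply coreL' X; apply coreR' Y
      rw [hcX, hcY]
      have hszX : X1.size + X2.size + 1 ≤ X.size := by
        have := core_size X; rw [hcX] at this; simpa [Fm.size] using this
      have hszY : Y1.size + Y2.size + 1 ≤ Y.size := by
        have := core_size Y; rw [hcY] at this; simpa [Fm.size] using this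
      apply Cl.andL
      apply Cl.andR
      · exact Cl.permL (List.Perm.swap _ _ _)
          (Cl.weakL (ih X1 Y1 (by omega) (hX1.trans hY1.symm)))
      · exact Cl.weakL (ih X2 Y2 (by omega) (hX2.trans hY2.symm))
    | or a b =>
      obtain ⟨X1, X2, hcX, hX1, hX2⟩ := core_head_or hEX
      obtain ⟨Y1, Y2, hcY, hY1, hY2⟩ := core_head_or (he ▸ hEX)
      apply coreL' X; apply coreR' Y
      rw [hcX, hcY]
      have hszX : X1.size + X2.size + 1 ≤ X.size := by
        have := core_size X; rw [hcX] at this; simpa [Fm.size] using this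
      have hszY : Y1.size + Y2.size + 1 ≤ Y.size := by
        have := core_size Y; rw [hcY] at this; simpa [Fm.size] using this
      apply Cl.orL
      · exact Cl.orR1 (ih X1 Y1 (by omega) (hX1.trans hY1.symm))
      · exact Cl.orR2 (ih X2 Y2 (by omega) (hX2.trans hY2.symm))
    | imp a b =>
      obtain ⟨X1, X2, hcX, hX1, hX2⟩ := core_head_imp hEX
      obtain ⟨Y1, Y2, hcY, hY1, hY2⟩ := core_head_imp (he ▸ hEX)
      apply coreL' X; apply coreR' Y
      rw [hcX, hcY]
      have hszX : X1.size + X2.size + 1 ≤ X.size := by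
        have := core_size X; rw [hcX] at this; simpa [Fm.size] using this
      have hszY : Y1.size + Y2.size + 1 ≤ Y.size := by
        have := core_size Y; rw [hcY] at this; simpa [Fm.size] using this
      apply Cl.impR
      apply Cl.permL (List.Perm.swap _ _ _)
      apply Cl.impL
      · exact Cl.permR (List.Perm.swap _ _ _)
          (Cl.weakR (ih Y1 X1 (by omega) (hY1.trans hX1.symm)))
      · exact Cl.permL (List.Perm.swap _ _ _)
          (Cl.weakL (ih X2 Y2 (by omega) (hX2.trans hY2.symm)))
    | all a =>
      obtain ⟨X1, hcX, hX1⟩ := core_head_all hEX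
      obtain ⟨Y1, hcY, hY1⟩ := core_head_all (he ▸ hEX)
      apply coreL' X; apply coreR' Y
      rw [hcX, hcY]
      have hszX : X1.size + 1 ≤ X.size := by
        have := core_size X; rw [hcX] at this; simpa [Fm.size] using this
      have hszY : Y1.size + 1 ≤ Y.size := by
        have := core_size Y; rw [hcY] at this; simpa [Fm.size] using this
      apply Cl.allR
      show Cl [(Fm.all X1).shift] (Y1 :: [])
      have hsh : (Fm.all X1).shift = .all (X1.rename (liftR Nat.succ)) := rfl
      rw [hsh]
      apply Cl.allL (Tm.var 0)
      rw [Fm.inst0]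
      exact ih X1 Y1 (by omega) (hX1.trans hY1.symm)
    | ex a =>
      obtain ⟨X1, hcX, hX1⟩ := core_head_ex hEX
      obtain ⟨Y1, hcY, hY1⟩ := core_head_ex (he ▸ hEX)
      apply coreL' X; apply coreR' Y
      rw [hcX, hcY]
      have hszX : X1.size + 1 ≤ X.size := by
        have := core_size X; rw [hcX] at this; simpa [Fm.size] using this
      have hszY : Y1.size + 1 ≤ Y.size := by
        have := core_size Y; rw [hcY] at this; simpa [Fm.size] using this
      apply Cl.exL
      show Cl (X1 :: []) [(Fm.ex Y1).shift]
      have hsh : (Fm.ex Y1).shift = .ex (Y1.rename (liftR Nat.succ)) := rfl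
      rw [hsh]
      apply Cl.exR (Tm.var 0)
      rw [Fm.inst0]
      exact ih X1 Y1 (by omega) (hX1.trans hY1.symm)

/-- Identity expansion: any two formulas with the same collapse are interderivable. -/
theorem expand {X Y : Fm} (he : e X = e Y) : Cl [X] [Y] :=
  expand_aux (X.size + Y.size) X Y le_rfl he

end ExpandSec


section InvSec

/-- Remove all occurrences of `¬X`. -/
def rmv (X : Fm) (Δ : List Fm) : List Fm := Δ.filter (fun B => B ≠ Fm.neg X)

theorem rmv_nil (X : Fm) : rmv X [] = [] := rfl

theorem rmv_cons_neg (X : Fm) (Δ : List Fm) : rmv X (Fm.neg X :: Δ) = rmv X Δ := by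
  simp [rmv]

theorem rmv_cons {X A : Fm} (h : A ≠ Fm.neg X) (Δ : List Fm) :
    rmv X (A :: Δ) = A :: rmv X Δ := by
  simp [rmv, h]

theorem rmv_perm (X : Fm) {Δ Δ' : List Fm} (p : Δ.Perm Δ') : (rmv X Δ).Perm (rmv X Δ') :=
  p.filter _

theorem rmv_sublist (X : Fm) (Δ : List Fm) : (rmv X Δ).Sublist Δ :=
  List.filter_sublist

theorem rmv_map_shift (X : Fm) (Δ : List Fm) :
    rmv (X.shift) (Δ.map Fm.shift) = (rmv X Δ).map Fm.shift := by
  induction Δ with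
  | nil => rfl
  | cons A Δ ih =>
    by_cases hA : A = Fm.neg X
    · subst hA
      have hsh : (Fm.neg X).shift = Fm.neg (X.shift) := rfl
      rw [List.map_cons, hsh, rmv_cons_neg, rmv_cons_neg, ih]
    · have hA' : A.shift ≠ Fm.neg (X.shift) := by
        intro hcon
        exact hA (Fm.shift_inj (by rw [hcon]; rfl))
      rw [List.map_cons, rmv_cons hA', rmv_cons hA, List.map_cons, ih]

theorem Cl.restoreR {Γ Δ : List Fm} {X A : Fm} (h : Cl Γ (rmv X (A :: Δ))) :
    Cl Γ (A :: rmv X Δ) := by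
  by_cases hA : A = Fm.neg X
  · subst hA; rw [rmv_cons_neg] at h; exact Cl.weakR h
  · rwa [rmv_cons hA] at h

theorem Cl.insL (G1 : List Fm) {Γ Δ : List Fm} (A : Fm) (h : Cl (G1 ++ Γ) Δ) :
    Cl (G1 ++ A :: Γ) Δ :=
  Cl.permL (List.perm_middle).symm (Cl.weakL h)

theorem Cl.restoreLAt (G1 : List Fm) {Γ Δ : List Fm} {X A : Fm}
    (h : Cl (G1 ++ rmv X (A :: Γ)) Δ) : Cl (G1 ++ A :: rmv X Γ) Δ := by
  by_cases hA : A = Fm.neg X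
  · subst hA; rw [rmv_cons_neg] at h; exact Cl.insL G1 _ h
  · rwa [rmv_cons hA] at h

theorem Cl.restoreL {Γ Δ : List Fm} {X A : Fm} (h : Cl (rmv X (A :: Γ)) Δ) :
    Cl (A :: rmv X Γ) Δ :=
  Cl.restoreLAt [] h

/-- Inversion of the right negation rule (with weakening built in). -/
theorem invNegR {Γ Δ : List Fm} (h : Cl Γ Δ) : ∀ X, Cl (X :: Γ) (rmv X Δ) := by
  induction h with
  | ax A =>
    intro X
    by_cases hA : A = Fm.neg X
    · subst hA
      rw [rmv_cons_neg, rmv_nil]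
      exact Cl.permL (List.Perm.swap _ _ _) (Cl.negL (Cl.ax X))
    · rw [rmv_cons hA, rmv_nil]
      exact Cl.weakL (Cl.ax A)
  | perm p1 p2 h ih =>
    intro X
    exact Cl.perm (p1.cons X) (rmv_perm X p2) (ih X)
  | contrL h ih =>
    intro X
    refine Cl.permL ?_ (Cl.contrL (Cl.permL (List.perm_middle (l₁ := [_, _])).symm (ih X)))
    exact List.Perm.swap _ _ _
  | contrR h ih =>
    intro X
    rename_i Γ' Δ' A
    by_cases hA : A = Fm.neg X
    · subst hA
      rw [rmv_cons_neg]
      have := ih X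
      rwa [rmv_cons_neg, rmv_cons_neg] at this
    · rw [rmv_cons hA]
      have := ih X
      rw [rmv_cons hA, rmv_cons hA] at this
      exact Cl.contrR this
  | weakL h ih =>
    intro X
    exact Cl.permL (List.Perm.swap _ _ _) (Cl.weakL (ih X))
  | weakR h ih =>
    intro X
    rename_i Γ' Δ' A
    by_cases hA : A = Fm.neg X
    · subst hA; rw [rmv_cons_neg]; exact ih X
    · rw [rmv_cons hA]; exact Cl.weakR (ih X)
  | topR =>
    intro X
    rw [rmv_cons (by simp)]
    exact Cl.topR
  | botL =>
    intro X
    exact Cl.permL (List.Perm.swap _ _ _) Cl.botL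
  | negL h ih =>
    intro X
    exact Cl.permL (List.Perm.swap _ _ _) (Cl.negL (Cl.restoreR (ih X)))
  | negR h ih =>
    intro X
    rename_i Γ' Δ' A
    by_cases hA : Fm.neg A = Fm.neg X
    · have hAX : A = X := by injection hA
      subst hAX
      rw [rmv_cons_neg]
      exact Cl.contrL (ih _)
    · rw [rmv_cons hA]
      have : A ≠ X := fun hc => hA (by rw [hc])
      exact Cl.negR (Cl.permL (List.Perm.swap _ _ _) (ih X))
  | andL h ih =>
    intro X
    refine Cl.permL (List.Perm.swap _ _ _) (Cl.andL ?_)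
    exact Cl.permL (List.perm_middle (l₁ := [_, _])).symm (ih X)
  | andR h1 h2 ih1 ih2 =>
    intro X
    rw [rmv_cons (by simp)]
    exact Cl.andR (Cl.restoreR (ih1 X)) (Cl.restoreR (ih2 X))
  | orL h1 h2 ih1 ih2 =>
    intro X
    refine Cl.permL (List.Perm.swap _ _ _) (Cl.orL ?_ ?_)
    · exact Cl.permL (List.Perm.swap _ _ _) (ih1 X)
    · exact Cl.permL (List.Perm.swap _ _ _) (ih2 X)
  | orR1 h ih =>
    intro X
    rw [rmv_cons (by simp)]
    exact Cl.orR1 (Cl.restoreR (ih X))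
  | orR2 h ih =>
    intro X
    rw [rmv_cons (by simp)]
    exact Cl.orR2 (Cl.restoreR (ih X))
  | impL h1 h2 ih1 ih2 =>
    intro X
    refine Cl.permL (List.Perm.swap _ _ _) (Cl.impL (Cl.restoreR (ih1 X)) ?_)
    exact Cl.permL (List.Perm.swap _ _ _) (ih2 X)
  | impR h ih =>
    intro X
    rw [rmv_cons (by simp)]
    exact Cl.impR (Cl.permL (List.Perm.swap _ _ _) (Cl.restoreR (ih X)))
  | allL t h ih =>
    intro X
    refine Cl.permL (List.Perm.swap _ _ _) (Cl.allL t ?_)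
    exact Cl.permL (List.Perm.swap _ _ _) (ih X)
  | allR h ih =>
    intro X
    rw [rmv_cons (by simp)]
    apply Cl.allR
    rw [List.map_cons]
    have := Cl.restoreR (ih X.shift)
    rwa [rmv_map_shift] at this
  | exL h ih =>
    intro X
    refine Cl.permL (List.Perm.swap _ _ _) (Cl.exL ?_)
    rw [List.map_cons]
    have := Cl.permL (List.Perm.swap _ _ _) (ih X.shift)
    rwa [rmv_map_shift] at this
  | exR t h ih =>
    intro X
    rw [rmv_cons (by simp)]
    exact Cl.exR t (Cl.restoreR (ih X))

/-- Inversion of the left negation rule (with weakening built in). -/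
theorem invNegL {Γ Δ : List Fm} (h : Cl Γ Δ) : ∀ X, Cl (rmv X Γ) (X :: Δ) := by
  induction h with
  | ax A =>
    intro X
    by_cases hA : A = Fm.neg X
    · subst hA
      rw [rmv_cons_neg, rmv_nil]
      exact Cl.permR (List.Perm.swap _ _ _) (Cl.negR (Cl.ax X))
    · rw [rmv_cons hA, rmv_nil]
      exact Cl.weakR (Cl.ax A)
  | perm p1 p2 h ih =>
    intro X
    exact Cl.perm (rmv_perm X p1) (p2.cons X) (ih X)
  | contrL h ih =>
    intro X
    rename_i Γ' Δ' A
    by_cases hA : A = Fm.neg X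
    · subst hA
      rw [rmv_cons_neg]
      have := ih X
      rwa [rmv_cons_neg, rmv_cons_neg] at this
    · rw [rmv_cons hA]
      have := ih X
      rw [rmv_cons hA, rmv_cons hA] at this
      exact Cl.contrL this
  | contrR h ih =>
    intro X
    refine Cl.permR ?_ (Cl.contrR (Cl.permR (List.perm_middle (l₁ := [_, _])).symm (ih X)))
    exact List.Perm.swap _ _ _
  | weakL h ih =>
    intro X
    rename_i Γ' Δ' A
    by_cases hA : A = Fm.neg X
    · subst hA; rw [rmv_cons_neg]; exact ih X
    · rw [rmv_cons hA]; exact Cl.weakL (ih X)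
  | weakR h ih =>
    intro X
    exact Cl.permR (List.Perm.swap _ _ _) (Cl.weakR (ih X))
  | topR =>
    intro X
    exact Cl.permR (List.Perm.swap _ _ _) Cl.topR
  | botL =>
    intro X
    rw [rmv_cons (by simp)]
    exact Cl.botL
  | negL h ih =>
    intro X
    rename_i Γ' Δ' A
    by_cases hA : Fm.neg A = Fm.neg X
    · have hAX : A = X := by injection hA
      subst hAX
      rw [rmv_cons_neg]
      exact Cl.contrR (ih _)
    · rw [rmv_cons hA]
      exact Cl.negL (Cl.permR (List.Perm.swap _ _ _) (ih X))
  | negR h ih =>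
    intro X
    exact Cl.permR (List.Perm.swap _ _ _) (Cl.negR (Cl.restoreL (ih X)))
  | andL h ih =>
    intro X
    rw [rmv_cons (by simp)]
    apply Cl.andL
    exact Cl.restoreLAt [_] (Cl.restoreLAt [] (ih X))
  | andR h1 h2 ih1 ih2 =>
    intro X
    refine Cl.permR (List.Perm.swap _ _ _) (Cl.andR ?_ ?_)
    · exact Cl.permR (List.Perm.swap _ _ _) (ih1 X)
    · exact Cl.permR (List.Perm.swap _ _ _) (ih2 X)
  | orL h1 h2 ih1 ih2 =>
    intro X
    rw [rmv_cons (by simp)]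
    exact Cl.orL (Cl.restoreL (ih1 X)) (Cl.restoreL (ih2 X))
  | orR1 h ih =>
    intro X
    refine Cl.permR (List.Perm.swap _ _ _) (Cl.orR1 ?_)
    exact Cl.permR (List.Perm.swap _ _ _) (ih X)
  | orR2 h ih =>
    intro X
    refine Cl.permR (List.Perm.swap _ _ _) (Cl.orR2 ?_)
    exact Cl.permR (List.Perm.swap _ _ _) (ih X)
  | impL h1 h2 ih1 ih2 =>
    intro X
    rw [rmv_cons (by simp)]
    refine Cl.impL ?_ (Cl.restoreL (ih2 X))
    exact Cl.permR (List.Perm.swap _ _ _) (ih1 X)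
  | impR h ih =>
    intro X
    refine Cl.permR (List.Perm.swap _ _ _) (Cl.impR ?_)
    exact Cl.permR (List.Perm.swap _ _ _) (Cl.restoreL (ih X))
  | allL t h ih =>
    intro X
    rw [rmv_cons (by simp)]
    exact Cl.allL t (Cl.restoreL (ih X))
  | allR h ih =>
    intro X
    refine Cl.permR (List.Perm.swap _ _ _) (Cl.allR ?_)
    rw [List.map_cons]
    have := Cl.permR (List.Perm.swap _ _ _) (ih X.shift)
    rwa [rmv_map_shift] at this
  | exL h ih =>
    intro X
    rw [rmv_cons (by simp)]
    apply Cl.exL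
    rw [List.map_cons]
    have := Cl.restoreL (ih X.shift)
    rwa [rmv_map_shift] at this
  | exR t h ih =>
    intro X
    refine Cl.permR (List.Perm.swap _ _ _) (Cl.exR t ?_)
    exact Cl.permR (List.Perm.swap _ _ _) (ih X)

end InvSec


section RepSec

def eRel (X Y : Fm) : Prop := e X = e Y

theorem forall2_perm {R : Fm → Fm → Prop} :
    ∀ {l1 l2 : List Fm}, l1.Perm l2 → ∀ {l2' : List Fm}, List.Forall₂ R l2 l2' →
      ∃ l1', List.Forall₂ R l1 l1' ∧ l1'.Perm l2' := by
  intro l1 l2 p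
  induction p with
  | nil =>
    intro l2' h; cases h; exact ⟨[], List.Forall₂.nil, List.Perm.nil⟩
  | cons x p ih =>
    intro l2' h
    cases h with
    | cons r h' =>
      obtain ⟨t, ht, hp⟩ := ih h'
      exact ⟨_ :: t, List.Forall₂.cons r ht, hp.cons _⟩
  | swap x y l =>
    intro l2' h
    cases h with
    | cons r1 h1 =>
      cases h1 with
      | cons r2 h2 =>
        exact ⟨_ :: _ :: _, List.Forall₂.cons r2 (List.Forall₂.cons r1 h2),
          List.Perm.swap _ _ _⟩
  | trans p1 p2 ih1 ih2 =>
    intro l2' h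
    obtain ⟨m, hm, hpm⟩ := ih2 h
    obtain ⟨l1', h1', hp1⟩ := ih1 hm
    exact ⟨l1', h1', hp1.trans hpm⟩

theorem forall2_shift {l l' : List Fm} (h : List.Forall₂ eRel l l') :
    List.Forall₂ eRel (l.map Fm.shift) (l'.map Fm.shift) := by
  induction h with
  | nil => exact List.Forall₂.nil
  | cons r _ ih =>
    refine List.Forall₂.cons ?_ ih
    show e (_root_.Fm.shift _) = e (_root_.Fm.shift _)
    rw [e_shift, e_shift]; exact congrArg _ r

/-- Main replacement theorem: a classical derivation stays valid when every
formula is replaced by one with the same double-negation collapse. -/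
theorem rep {Γ Δ : List Fm} (h : Cl Γ Δ) : ∀ Γ' Δ',
    List.Forall₂ eRel Γ Γ' → List.Forall₂ eRel Δ Δ' → Cl Γ' Δ' := by
  induction h with
  | ax A =>
    intro Γ' Δ' hG hD
    cases hG with | cons rX hG' =>
    cases hG' with | nil =>
    cases hD with | cons rY hD' =>
    cases hD' with | nil =>
    exact expand ((Eq.symm rX).trans rY)
  | perm p1 p2 h ih =>
    intro Γ' Δ' hG hD
    obtain ⟨Γ₁, hF1, hp1⟩ := forall2_perm p1 hG
    obtain ⟨Δ₁, hF2, hp2⟩ := forall2_perm p2 hD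
    exact Cl.perm hp1 hp2 (ih Γ₁ Δ₁ hF1 hF2)
  | @contrL Γ Δ A h ih =>
    intro Γ' Δ' hG hD
    cases hG with | cons rX hG' =>
    exact Cl.contrL (ih _ _ (List.Forall₂.cons rX (List.Forall₂.cons rX hG')) hD)
  | @contrR Γ Δ A h ih =>
    intro Γ' Δ' hG hD
    cases hD with | cons rY hD' =>
    exact Cl.contrR (ih _ _ hG (List.Forall₂.cons rY (List.Forall₂.cons rY hD')))
  | @weakL Γ Δ A h ih =>
    intro Γ' Δ' hG hD
    cases hG with | cons rX hG' =>
    exact Cl.weakL (ih _ _ hG' hD)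
  | @weakR Γ Δ A h ih =>
    intro Γ' Δ' hG hD
    cases hD with | cons rY hD' =>
    exact Cl.weakR (ih _ _ hG hD')
  | @topR Γ Δ =>
    intro Γ' Δ' hG hD
    cases hD with | cons rY hD' =>
    rename_i Y Δ₁
    have hY : e Y = .top := (Eq.symm rY)
    apply coreR' Y
    rw [core_head_top hY]
    exact Cl.topR
  | @botL Γ Δ =>
    intro Γ' Δ' hG hD
    cases hG with | cons rX hG' =>
    rename_i X Γ₁
    have hX : e X = .bot := (Eq.symm rX)
    apply coreL' X
    rw [core_head_bot hX]
    exact Cl.botL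
  | @negL Γ Δ A h ih =>
    intro Γ' Δ' hG hD
    cases hG with | cons rX hG' =>
    rename_i X Γ₁
    have r : e X = e (Fm.neg A) := (Eq.symm rX)
    by_cases hA : ∃ c, e A = .neg c
    · obtain ⟨c, hA⟩ := hA
      have hc : ∀ B, c ≠ .neg B := fun B hB => e_ok A B (by rw [hA, hB])
      have heX : e X = c := by rw [r]; show nneg (e A) = c; rw [hA]; rfl
      have hY : e A = e (Fm.neg X) := by
        show e A = nneg (e X)
        rw [heX, nneg_of_nonneg hc, hA]
      have d := ih _ _ hG' (List.Forall₂.cons hY hD)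
      have d2 := invNegR d X
      rw [rmv_cons_neg] at d2
      exact Cl.subR (rmv_sublist X _) d2
    · have hAn : ∀ c, e A ≠ .neg c := fun c hc => hA ⟨c, hc⟩
      have heX : e X = .neg (e A) := by
        rw [r]; show nneg (e A) = _; rw [nneg_of_nonneg hAn]
      obtain ⟨X1, hcX, hX1⟩ := core_head_neg heX
      have d := ih _ _ hG' (List.Forall₂.cons (Eq.symm hX1) hD)
      apply coreL' X
      rw [hcX]
      exact Cl.negL d
  | @negR Γ Δ A h ih =>
    intro Γ' Δ' hG hD
    cases hD with | cons rY hD' =>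
    rename_i Y Δ₁
    have r : e Y = e (Fm.neg A) := (Eq.symm rY)
    by_cases hA : ∃ c, e A = .neg c
    · obtain ⟨c, hA⟩ := hA
      have hc : ∀ B, c ≠ .neg B := fun B hB => e_ok A B (by rw [hA, hB])
      have heY : e Y = c := by rw [r]; show nneg (e A) = c; rw [hA]; rfl
      have hX : e A = e (Fm.neg Y) := by
        show e A = nneg (e Y)
        rw [heY, nneg_of_nonneg hc, hA]
      have d := ih _ _ (List.Forall₂.cons hX hG) hD'
      have d2 := invNegL d Y
      rw [rmv_cons_neg] at d2
      exact Cl.subL (rmv_sublist Y _) d2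
    · have hAn : ∀ c, e A ≠ .neg c := fun c hc => hA ⟨c, hc⟩
      have heY : e Y = .neg (e A) := by
        rw [r]; show nneg (e A) = _; rw [nneg_of_nonneg hAn]
      obtain ⟨Y1, hcY, hY1⟩ := core_head_neg heY
      have d := ih _ _ (List.Forall₂.cons (Eq.symm hY1) hG) hD'
      apply coreR' Y
      rw [hcY]
      exact Cl.negR d
  | @andL Γ Δ A B h ih =>
    intro Γ' Δ' hG hD
    cases hG with | cons rX hG' =>
    rename_i X Γ₁
    have heX : e X = .and (e A) (e B) := (Eq.symm rX)
    obtain ⟨X1, X2, hcX, hX1, hX2⟩ := core_head_and heX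
    have d := ih _ _ (List.Forall₂.cons (Eq.symm hX1)
      (List.Forall₂.cons (Eq.symm hX2) hG')) hD
    apply coreL' X
    rw [hcX]
    exact Cl.andL d
  | @andR Γ Δ A B h1 h2 ih1 ih2 =>
    intro Γ' Δ' hG hD
    cases hD with | cons rY hD' =>
    rename_i Y Δ₁
    have heY : e Y = .and (e A) (e B) := (Eq.symm rY)
    obtain ⟨Y1, Y2, hcY, hY1, hY2⟩ := core_head_and heY
    have d1 := ih1 _ _ hG (List.Forall₂.cons (Eq.symm hY1) hD')
    have d2 := ih2 _ _ hG (List.Forall₂.cons (Eq.symm hY2) hD')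
    apply coreR' Y
    rw [hcY]
    exact Cl.andR d1 d2
  | @orL Γ Δ A B h1 h2 ih1 ih2 =>
    intro Γ' Δ' hG hD
    cases hG with | cons rX hG' =>
    rename_i X Γ₁
    have heX : e X = .or (e A) (e B) := (Eq.symm rX)
    obtain ⟨X1, X2, hcX, hX1, hX2⟩ := core_head_or heX
    have d1 := ih1 _ _ (List.Forall₂.cons (Eq.symm hX1) hG') hD
    have d2 := ih2 _ _ (List.Forall₂.cons (Eq.symm hX2) hG') hD
    apply coreL' X
    rw [hcX]
    exact Cl.orL d1 d2
  | @orR1 Γ Δ A B h ih =>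
    intro Γ' Δ' hG hD
    cases hD with | cons rY hD' =>
    rename_i Y Δ₁
    have heY : e Y = .or (e A) (e B) := (Eq.symm rY)
    obtain ⟨Y1, Y2, hcY, hY1, hY2⟩ := core_head_or heY
    have d := ih _ _ hG (List.Forall₂.cons (Eq.symm hY1) hD')
    apply coreR' Y
    rw [hcY]
    exact Cl.orR1 d
  | @orR2 Γ Δ A B h ih =>
    intro Γ' Δ' hG hD
    cases hD with | cons rY hD' =>
    rename_i Y Δ₁
    have heY : e Y = .or (e A) (e B) := (Eq.symm rY)
    obtain ⟨Y1, Y2, hcY, hY1, hY2⟩ := core_head_or heY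
    have d := ih _ _ hG (List.Forall₂.cons (Eq.symm hY2) hD')
    apply coreR' Y
    rw [hcY]
    exact Cl.orR2 d
  | @impL Γ Δ A B h1 h2 ih1 ih2 =>
    intro Γ' Δ' hG hD
    cases hG with | cons rX hG' =>
    rename_i X Γ₁
    have heX : e X = .imp (e A) (e B) := (Eq.symm rX)
    obtain ⟨X1, X2, hcX, hX1, hX2⟩ := core_head_imp heX
    have d1 := ih1 _ _ hG' (List.Forall₂.cons (Eq.symm hX1) hD)
    have d2 := ih2 _ _ (List.Forall₂.cons (Eq.symm hX2) hG') hD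
    apply coreL' X
    rw [hcX]
    exact Cl.impL d1 d2
  | @impR Γ Δ A B h ih =>
    intro Γ' Δ' hG hD
    cases hD with | cons rY hD' =>
    rename_i Y Δ₁
    have heY : e Y = .imp (e A) (e B) := (Eq.symm rY)
    obtain ⟨Y1, Y2, hcY, hY1, hY2⟩ := core_head_imp heY
    have d := ih _ _ (List.Forall₂.cons (Eq.symm hY1) hG)
      (List.Forall₂.cons (Eq.symm hY2) hD')
    apply coreR' Y
    rw [hcY]
    exact Cl.impR d
  | @allL Γ Δ A t h ih =>
    intro Γ' Δ' hG hD
    cases hG with | cons rX hG' =>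
    rename_i X Γ₁
    have heX : e X = .all (e A) := (Eq.symm rX)
    obtain ⟨X1, hcX, hX1⟩ := core_head_all heX
    have hrel : eRel (A.inst t) (X1.inst t) := by
      show e (A.inst t) = e (X1.inst t)
      rw [e_inst, e_inst, hX1]
    have d := ih _ _ (List.Forall₂.cons hrel hG') hD
    apply coreL' X
    rw [hcX]
    exact Cl.allL t d
  | @allR Γ Δ A h ih =>
    intro Γ' Δ' hG hD
    cases hD with | cons rY hD' =>
    rename_i Y Δ₁
    have heY : e Y = .all (e A) := (Eq.symm rY)
    obtain ⟨Y1, hcY, hY1⟩ := core_head_all heY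
    have d := ih _ _ (forall2_shift hG)
      (List.Forall₂.cons (Eq.symm hY1) (forall2_shift hD'))
    apply coreR' Y
    rw [hcY]
    exact Cl.allR d
  | @exL Γ Δ A h ih =>
    intro Γ' Δ' hG hD
    cases hG with | cons rX hG' =>
    rename_i X Γ₁
    have heX : e X = .ex (e A) := (Eq.symm rX)
    obtain ⟨X1, hcX, hX1⟩ := core_head_ex heX
    have d := ih _ _ (List.Forall₂.cons (Eq.symm hX1) (forall2_shift hG'))
      (forall2_shift hD)
    apply coreL' X
    rw [hcX]
    exact Cl.exL d
  | @exR Γ Δ A t h ih =>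
    intro Γ' Δ' hG hD
    cases hD with | cons rY hD' =>
    rename_i Y Δ₁
    have heY : e Y = .ex (e A) := (Eq.symm rY)
    obtain ⟨Y1, hcY, hY1⟩ := core_head_ex heY
    have hrel : eRel (A.inst t) (Y1.inst t) := by
      show e (A.inst t) = e (Y1.inst t)
      rw [e_inst, e_inst, hY1]
    have d := ih _ _ hG (List.Forall₂.cons hrel hD')
    apply coreR' Y
    rw [hcY]
    exact Cl.exR t d

end RepSec


section EmbedSec

theorem option_toList_map (f : Fm → Fm) (δ : Option Fm) :
    (δ.map f).toList = δ.toList.map f := by cases δ <;> rfl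

/-- Embedding of the constructive calculus into the classical one. -/
theorem embed {Γ : List Fm} {δ : Option Fm} (h : Intu Γ δ) : Cl Γ δ.toList := by
  induction h with
  | ax A => exact Cl.ax A
  | perm p h ih => exact Cl.permL p ih
  | contrL h ih => exact Cl.contrL ih
  | weakL h ih => exact Cl.weakL ih
  | weakR h ih => exact Cl.weakR ih
  | topR => exact Cl.topR
  | botL => exact Cl.botL
  | negL h ih => exact Cl.negL ih
  | negR h ih => exact Cl.negR ih
  | andL h ih => exact Cl.andL ih
  | andR h1 h2 ih1 ih2 => exact Cl.andR ih1 ih2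
  | orL h1 h2 ih1 ih2 => exact Cl.orL ih1 ih2
  | orR1 h ih => exact Cl.orR1 ih
  | orR2 h ih => exact Cl.orR2 ih
  | impL h1 h2 ih1 ih2 =>
    exact Cl.impL (Cl.subR (List.Sublist.cons₂ _ (List.nil_sublist _)) ih1) ih2
  | impR h ih => exact Cl.impR ih
  | allL t h ih => exact Cl.allL t ih
  | allR h ih => exact Cl.allR ih
  | exL h ih =>
    apply Cl.exL
    rwa [option_toList_map] at ih
  | exR t h ih => exact Cl.exR t ih

/-- No cut-free classical proof of an empty-antecedent, all-atomic sequent. -/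
theorem no_atomic {Γ Δ : List Fm} (h : Cl Γ Δ) :
    Γ = [] → (∀ B ∈ Δ, ∃ p l, B = Fm.atom p l) → False := by
  induction h with
  | ax A => intro hG _; simp at hG
  | perm p1 p2 h ih =>
    intro hG hD
    subst hG
    refine ih (List.Perm.eq_nil ?_) ?_
    · exact p1
    · intro B hB; exact hD B (p2.subset hB)
  | contrL h ih => intro hG _; simp at hG
  | @contrR Γ' Δ' A h ih =>
    intro hG hD
    refine ih hG ?_
    intro B hB
    rcases List.mem_cons.mp hB with h1 | h1
    · exact hD _ (h1 ▸ List.mem_cons_self)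
    · rcases List.mem_cons.mp h1 with h2 | h2
      · exact hD _ (h2 ▸ List.mem_cons_self)
      · exact hD _ (List.mem_cons_of_mem _ h2)
  | weakL h ih => intro hG _; simp at hG
  | weakR h ih =>
    intro hG hD
    exact ih hG (fun B hB => hD B (List.mem_cons_of_mem _ hB))
  | topR =>
    intro _ hD
    obtain ⟨p, l, hpl⟩ := hD _ (List.mem_cons_self)
    exact Fm.noConfusion hpl
  | botL => intro hG _; simp at hG
  | negL h ih => intro hG _; simp at hG
  | negR h ih =>
    intro _ hD
    obtain ⟨p, l, hpl⟩ := hD _ (List.mem_cons_self)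
    exact Fm.noConfusion hpl
  | andL h ih => intro hG _; simp at hG
  | andR h1 h2 ih1 ih2 =>
    intro _ hD
    obtain ⟨p, l, hpl⟩ := hD _ (List.mem_cons_self)
    exact Fm.noConfusion hpl
  | orL h1 h2 ih1 ih2 => intro hG _; simp at hG
  | orR1 h ih =>
    intro _ hD
    obtain ⟨p, l, hpl⟩ := hD _ (List.mem_cons_self)
    exact Fm.noConfusion hpl
  | orR2 h ih =>
    intro _ hD
    obtain ⟨p, l, hpl⟩ := hD _ (List.mem_cons_self)
    exact Fm.noConfusion hpl
  | impL h1 h2 ih1 ih2 => intro hG _; simp at hG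
  | impR h ih =>
    intro _ hD
    obtain ⟨p, l, hpl⟩ := hD _ (List.mem_cons_self)
    exact Fm.noConfusion hpl
  | allL t h ih => intro hG _; simp at hG
  | allR h ih =>
    intro _ hD
    obtain ⟨p, l, hpl⟩ := hD _ (List.mem_cons_self)
    exact Fm.noConfusion hpl
  | exL h ih => intro hG _; simp at hG
  | exR t h ih =>
    intro _ hD
    obtain ⟨p, l, hpl⟩ := hD _ (List.mem_cons_self)
    exact Fm.noConfusion hpl

end EmbedSec


section GlvSec

/-- negated light translation -/
def nl (B : Fm) : Fm := .neg B.light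

theorem Intu.dnIntro {Γ : List Fm} {X : Fm} (h : Intu (X :: Γ) none) :
    Intu (Fm.dn X :: Γ) none :=
  Intu.negL (Intu.negR h)

/-- Upgrade a refutation of the light translation to one of the full translation. -/
theorem negbar (A : Fm) {Γ : List Fm} (h : Intu (.neg A.light :: Γ) none) :
    Intu (.neg A.bar :: Γ) none := by
  cases A with
  | atom p l => exact h
  | top => exact Intu.negL (Intu.negR h)
  | bot => exact Intu.negL (Intu.negR h)
  | neg B => exact Intu.negL (Intu.negR h)
  | and B C => exact Intu.negL (Intu.negR h)
  | or B C => exact Intu.negL (Intu.negR h)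
  | imp B C => exact Intu.negL (Intu.negR h)
  | all B => exact Intu.negL (Intu.negR h)
  | ex B => exact Intu.negL (Intu.negR h)

theorem map_bar_shift (Γ : List Fm) :
    (Γ.map Fm.shift).map Fm.bar = (Γ.map Fm.bar).map Fm.shift := by
  rw [List.map_map, List.map_map]
  exact List.map_congr_left (fun B _ => Fm.bar_shift B)

theorem map_nl_shift (Δ : List Fm) :
    (Δ.map Fm.shift).map nl = (Δ.map nl).map Fm.shift := by
  rw [List.map_map, List.map_map]
  refine List.map_congr_left (fun B _ => ?_)
  show nl B.shift = (nl B).shift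
  unfold nl
  rw [Fm.light_shift]
  rfl

/-- The Kolmogorov-Glivenko style main induction: a classical proof of `Γ ⊢ Δ`
yields a constructive refutation of `‖Γ‖, ¬|Δ|`. -/
theorem glv {Γ Δ : List Fm} (h : Cl Γ Δ) :
    Intu (Γ.map Fm.bar ++ Δ.map nl) none := by
  induction h with
  | ax A =>
    cases A with
    | atom p l => exact Intu.perm (List.Perm.swap _ _ _) (Intu.negL (Intu.ax _))
    | top => exact Intu.negL (Intu.ax _)
    | bot => exact Intu.negL (Intu.ax _)
    | neg B => exact Intu.negL (Intu.ax _)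
    | and B C => exact Intu.negL (Intu.ax _)
    | or B C => exact Intu.negL (Intu.ax _)
    | imp B C => exact Intu.negL (Intu.ax _)
    | all B => exact Intu.negL (Intu.ax _)
    | ex B => exact Intu.negL (Intu.ax _)
  | perm p1 p2 h ih =>
    exact Intu.perm ((p1.map Fm.bar).append (p2.map nl)) ih
  | contrL h ih => exact Intu.contrL ih
  | contrR h ih =>
    have h1 := Intu.perm List.perm_middle ih
    have h2 := Intu.perm (List.Perm.cons _ List.perm_middle) h1
    exact Intu.perm List.perm_middle.symm (Intu.contrL h2)
  | weakL h ih => exact Intu.weakL ih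
  | weakR h ih => exact Intu.perm List.perm_middle.symm (Intu.weakL ih)
  | topR => exact Intu.perm List.perm_middle.symm (Intu.negL Intu.topR)
  | botL => exact Intu.negL (Intu.negR Intu.botL)
  | negL h ih =>
    have s0 := negbar _ (Intu.perm List.perm_middle ih)
    exact Intu.negL (Intu.negR (Intu.negL (Intu.negR s0)))
  | negR h ih =>
    exact Intu.perm List.perm_middle.symm (Intu.negL (Intu.negR (Intu.negL (Intu.negR ih))))
  | andL h ih =>
    have d1 := Intu.perm (List.Perm.swap _ _ _) ih
    have d2 := Intu.dnIntro d1
    have d3 := Intu.perm (List.Perm.swap _ _ _) d2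
    have d4 := Intu.dnIntro d3
    exact Intu.negL (Intu.negR (Intu.andL d4))
  | andR h1 h2 ih1 ih2 =>
    have f1 := Intu.negR (negbar _ (Intu.perm List.perm_middle ih1))
    have f2 := Intu.negR (negbar _ (Intu.perm List.perm_middle ih2))
    exact Intu.perm List.perm_middle.symm (Intu.negL (Intu.andR f1 f2))
  | orL h1 h2 ih1 ih2 =>
    exact Intu.negL (Intu.negR (Intu.orL (Intu.dnIntro ih1) (Intu.dnIntro ih2)))
  | orR1 h ih =>
    have f1 := Intu.negR (negbar _ (Intu.perm List.perm_middle ih))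
    exact Intu.perm List.perm_middle.symm (Intu.negL (Intu.orR1 f1))
  | orR2 h ih =>
    have f1 := Intu.negR (negbar _ (Intu.perm List.perm_middle ih))
    exact Intu.perm List.perm_middle.symm (Intu.negL (Intu.orR2 f1))
  | impL h1 h2 ih1 ih2 =>
    have pA := Intu.negR (negbar _ (Intu.perm List.perm_middle ih1))
    have pB := Intu.dnIntro ih2
    exact Intu.negL (Intu.negR (Intu.impL pA pB))
  | impR h ih =>
    have s1 := Intu.perm ((List.Perm.cons _ List.perm_middle).trans (List.Perm.swap _ _ _)) ih
    have s2 := negbar _ s1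
    have s3 := Intu.perm (List.Perm.swap _ _ _) s2
    have s4 := Intu.dnIntro s3
    have s5 := Intu.perm (List.Perm.swap _ _ _) s4
    have s6 := Intu.negR s5
    exact Intu.perm List.perm_middle.symm (Intu.negL (Intu.impR s6))
  | @allL Γ' Δ' A t h ih =>
    rw [show ((A.inst t :: Γ').map Fm.bar) = (A.inst t).bar :: Γ'.map Fm.bar from rfl,
      Fm.bar_inst] at ih
    have s2 := Intu.dnIntro ih
    have s2' : Intu ((Fm.dn A.bar).inst t :: (Γ'.map Fm.bar ++ Δ'.map nl)) none := s2
    have s3 := Intu.allL t s2'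
    exact Intu.negL (Intu.negR s3)
  | @allR Γ' Δ' A h ih =>
    rw [map_bar_shift, show ((A :: Δ'.map Fm.shift).map nl) = nl A :: (Δ'.map Fm.shift).map nl
      from rfl, map_nl_shift] at ih
    have s1 := Intu.perm List.perm_middle ih
    rw [← List.map_append] at s1
    have s2 := negbar A s1
    have s3 := Intu.negR s2
    have s4 := Intu.allR s3
    exact Intu.perm List.perm_middle.symm (Intu.negL s4)
  | @exL Γ' Δ' A h ih =>
    rw [show ((A :: Γ'.map Fm.shift).map Fm.bar) = A.bar :: (Γ'.map Fm.shift).map Fm.bar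
      from rfl, map_bar_shift, map_nl_shift] at ih
    have ih' : Intu (A.bar :: ((Γ'.map Fm.bar ++ Δ'.map nl).map Fm.shift)) none := by
      rw [List.map_append]; exact ih
    have s2 := Intu.dnIntro ih'
    have s3 := Intu.exL (Δ := none) s2
    exact Intu.negL (Intu.negR s3)
  | @exR Γ' Δ' A t h ih =>
    have s1 := Intu.perm List.perm_middle ih
    have s2 := negbar (A.inst t) s1
    rw [show (nl (A.inst t)) = .neg (A.inst t).light from rfl] at s1
    have s2' : Intu (.neg ((A.bar).inst t) :: (Γ'.map Fm.bar ++ Δ'.map nl)) none := by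
      rw [← Fm.bar_inst]; exact s2
    have s3 := Intu.negR s2'
    have s3' : Intu (Γ'.map Fm.bar ++ Δ'.map nl) (some ((Fm.dn A.bar).inst t)) := s3
    have s4 := Intu.exR t s3'
    exact Intu.perm List.perm_middle.symm (Intu.negL s4)

end GlvSec


theorem stmt4 (A : Fm) : Cl [] [A] ↔ Intu [] (some A.bar) := by
  constructor
  · intro h
    have g : Intu ([] ++ [A].map nl) none := glv h
    cases A with
    | atom p l =>
      exfalso
      refine no_atomic h rfl ?_
      intro B hB
      rw [List.mem_singleton] at hB
      exact ⟨p, l, hB⟩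
    | top => exact Intu.negR g
    | bot => exact Intu.negR g
    | neg B => exact Intu.negR g
    | and B C => exact Intu.negR g
    | or B C => exact Intu.negR g
    | imp B C => exact Intu.negR g
    | all B => exact Intu.negR g
    | ex B => exact Intu.negR g
  · intro h
    have c : Cl [] [A.bar] := embed h
    exact rep c [] [A] List.Forall₂.nil (List.Forall₂.cons (e_bar A) List.Forall₂.nil)
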